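/- Let s satisfy s''(t) = 6 s(t)^2 + 6 t on an interval I containing 0 with s(0) = s'(0) = 0. Then the function t ↦ s'(t)^2 - 4 s(t)^3 is strictly increasing on I ∩ [0, ∞); consequently s'(t) > 2 s(t)^{3/2} for all t > 0 in I. -/

import Mathlib

open Set

theorem painleve_energy_monotone
    (s : ℝ → ℝ) (a b : ℝ) (ha : a < 0) (hb : 0 < b)
    (hdiff : ∀ t ∈ Ioo a b, DifferentiableAt ℝ s t ∧ DifferentiableAt ℝ (deriv s) t)
    (heq : ∀ t ∈ Ioo a b, deriv (deriv s) t = 6 * (s t) ^ 2 + 6 * t)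
    (h0 : s 0 = 0) (h0' : deriv s 0 = 0) :
    StrictMonoOn (fun t => (deriv s t) ^ 2 - 4 * (s t) ^ 3) (Ioo a b ∩ Ici 0) ∧
    ∀ t ∈ Ioo a b, 0 < t → deriv s t > 2 * (s t) ^ ((3 : ℝ) / 2) := by
  have hset : Ioo a b ∩ Ici 0 = Ico 0 b := by
    ext t
    simp only [mem_inter_iff, mem_Ioo, mem_Ici, mem_Ico]
    constructor
    · rintro ⟨⟨_, h2⟩, h3⟩; exact ⟨h3, h2⟩
    · rintro ⟨h1, h2⟩; exact ⟨⟨lt_of_lt_of_le ha h1, h2⟩, h1⟩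
  have hsub : Ico 0 b ⊆ Ioo a b := fun t ht =>
    ⟨lt_of_lt_of_le ha ht.1, ht.2⟩
  have hsub2 : Ioo 0 b ⊆ Ioo a b := fun t ht => ⟨lt_trans ha ht.1, ht.2⟩
  -- deriv s is strictly monotone on Ico 0 b
  have hmono1 : StrictMonoOn (deriv s) (Ico 0 b) := by
    apply strictMonoOn_of_deriv_pos (convex_Ico 0 b)
    · apply ContinuousOn.mono (s := Ioo a b)
      · exact fun t ht => ((hdiff t ht).2.continuousAt).continuousWithinAt
      · exact hsub
    · intro t ht
      rw [interior_Ico] at ht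
      rw [heq t (hsub2 ht)]
      nlinarith [sq_nonneg (s t), ht.1]
  have hs' : ∀ t ∈ Ioo 0 b, 0 < deriv s t := by
    intro t ht
    have := hmono1 ⟨le_refl 0, hb⟩ ⟨le_of_lt ht.1, ht.2⟩ ht.1
    rwa [h0'] at this
  -- s is strictly monotone on Ico 0 b
  have hmono2 : StrictMonoOn s (Ico 0 b) := by
    apply strictMonoOn_of_deriv_pos (convex_Ico 0 b)
    · apply ContinuousOn.mono (s := Ioo a b)
      · exact fun t ht => ((hdiff t ht).1.continuousAt).continuousWithinAt
      · exact hsub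
    · intro t ht
      rw [interior_Ico] at ht
      exact hs' t ht
  have hspos : ∀ t ∈ Ioo 0 b, 0 < s t := by
    intro t ht
    have := hmono2 ⟨le_refl 0, hb⟩ ⟨le_of_lt ht.1, ht.2⟩ ht.1
    rwa [h0] at this
  -- energy strictly monotone
  have hE : StrictMonoOn (fun t => (deriv s t) ^ 2 - 4 * (s t) ^ 3) (Ico 0 b) := by
    apply strictMonoOn_of_deriv_pos (convex_Ico 0 b)
    · apply ContinuousOn.mono (s := Ioo a b) _ hsub
      intro t ht
      exact (((hdiff t ht).2.pow 2).sub (((hdiff t ht).1.pow 3).const_mul 4)).continuousAt.continuousWithinAt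
    · intro t ht
      rw [interior_Ico] at ht
      have htab := hsub2 ht
      have h1 : HasDerivAt (deriv s) (6 * (s t) ^ 2 + 6 * t) t := by
        rw [← heq t htab]; exact (hdiff t htab).2.hasDerivAt
      have h2 : HasDerivAt s (deriv s t) t := (hdiff t htab).1.hasDerivAt
      have hD : HasDerivAt (fun t => (deriv s t) ^ 2 - 4 * (s t) ^ 3)
          ((2 : ℕ) * deriv s t ^ 1 * (6 * (s t) ^ 2 + 6 * t)
            - 4 * ((3 : ℕ) * s t ^ 2 * deriv s t)) t :=
        (h1.pow 2).sub ((h2.pow 3).const_mul 4)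
      rw [hD.deriv]
      have := hs' t ht
      have := ht.1
      push_cast
      nlinarith
  constructor
  · rwa [hset]
  · intro t ht htpos
    have htI : t ∈ Ioo 0 b := ⟨htpos, ht.2⟩
    have hEpos : 0 < (deriv s t) ^ 2 - 4 * (s t) ^ 3 := by
      have := hE (a := 0) (b := t) ⟨le_refl 0, hb⟩ ⟨le_of_lt htpos, ht.2⟩ htpos
      simp only [h0, h0'] at this
      simpa using this
    have hst : 0 < s t := hspos t htI
    have hsq : (2 * (s t) ^ ((3 : ℝ) / 2)) ^ 2 = 4 * (s t) ^ 3 := by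
      rw [mul_pow, ← Real.rpow_natCast ((s t) ^ ((3:ℝ)/2)) 2,
        ← Real.rpow_mul (le_of_lt hst)]
      norm_num
    have h' : (2 * (s t) ^ ((3 : ℝ) / 2)) ^ 2 < (deriv s t) ^ 2 := by
      rw [hsq]; linarith
    exact lt_of_pow_lt_pow_left₀ 2 (le_of_lt (hs' t htI)) h'
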